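/- (Lemma 5.2, per homogeneous type.) Suppose 0 < ε < min(−χ_ℓ, −λ/(d+2)). Let i ∈ {1,…,ℓ} and s ∈ ℕ^ℓ be such that χ_i > Σ_{j=1}^ℓ s_j χ_j (a non-sub-resonance type), and let R : E' → E'_i have homogeneous type s with ‖R(w)‖ ≤ C for all w ∈ E' with ‖w‖ ≤ 1. Then λ + (d+2)ε < 0, and for every v ∈ E with ‖v‖ ≤ 1, ‖F_i^{-1}(R(F(v)))‖ ≤ e^{λ + (d+2)ε} · C, a bound strictly smaller than C whenever C > 0. -/

import Mathlib

/-- A map `R` from a product of real vector spaces to a real vector space has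
homogeneous type `s = (s 0, …, s (ℓ-1))` if scaling the `j`-th component by `a j`
multiplies the value by `∏ j, (a j) ^ (s j)`. -/
def HomogType {ℓ : ℕ} {E : Fin ℓ → Type*} [∀ j, AddCommGroup (E j)] [∀ j, Module ℝ (E j)]
    {V : Type*} [AddCommGroup V] [Module ℝ V]
    (s : Fin ℓ → ℕ) (R : (∀ j, E j) → V) : Prop :=
  ∀ (a : Fin ℓ → ℝ) (w : ∀ j, E j), R (fun j => a j • w j) = (∏ j, a j ^ s j) • R w

/-- Lemma 5.2 per homogeneous type: if `0 < ε < min (-χ_ℓ) (-λ/(d+2))` and `(i, s)` is a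
non-sub-resonance type, then `λ + (d+2) ε < 0` and the conjugation `Fᵢ⁻¹ ∘ R ∘ F` of a map of
homogeneous type `s` bounded by `C` on the unit ball is bounded by `e^{λ + (d+2) ε} C < C`. -/
theorem conj_contracts_nonsubresonance
    {ℓ : ℕ} (χ : Fin (ℓ + 1) → ℝ) (hmono : StrictMono χ) (hneg : ∀ j, χ j < 0)
    (E E' : Fin (ℓ + 1) → Type*)
    [∀ j, NormedAddCommGroup (E j)] [∀ j, NormedSpace ℝ (E j)]
    [∀ j, NormedAddCommGroup (E' j)] [∀ j, NormedSpace ℝ (E' j)]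
    (d : ℤ) (hd : d = ⌊χ 0 / χ (Fin.last ℓ)⌋)
    (lamT : ℝ)
    (hlamT : IsGreatest {x : ℝ | x < 0 ∧ ∃ (i : Fin (ℓ + 1)) (s : Fin (ℓ + 1) → ℕ),
      x = -χ i + ∑ j, (s j : ℝ) * χ j} lamT)
    (lam : ℝ) (hlam : lam = max lamT (-χ 0 + ((d : ℝ) + 1) * χ (Fin.last ℓ)))
    (ε : ℝ) (hε : 0 < ε)
    (hε' : ε < min (-χ (Fin.last ℓ)) (-lam / ((d : ℝ) + 2)))
    (F : ∀ j, E j ≃ₗ[ℝ] E' j)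
    (hF : ∀ j, ∀ u : E j,
      Real.exp (χ j - ε) * ‖u‖ ≤ ‖F j u‖ ∧ ‖F j u‖ ≤ Real.exp (χ j + ε) * ‖u‖)
    (i : Fin (ℓ + 1)) (s : Fin (ℓ + 1) → ℕ)
    (hns : (∑ j, (s j : ℝ) * χ j) < χ i)
    (R : PiLp 2 E' → E' i) (hR : HomogType s (fun w => R (WithLp.toLp 2 w)))
    (C : ℝ) (hC : ∀ w : PiLp 2 E', ‖w‖ ≤ 1 → ‖R w‖ ≤ C) :
    lam + ((d : ℝ) + 2) * ε < 0 ∧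
      (∀ v : PiLp 2 E, ‖v‖ ≤ 1 →
        ‖(F i).symm (R (WithLp.toLp 2 (fun j => F j (v j))))‖ ≤ Real.exp (lam + ((d : ℝ) + 2) * ε) * C) ∧
      (0 < C → Real.exp (lam + ((d : ℝ) + 2) * ε) * C < C) := by
  obtain ⟨⟨hlamT_neg, -⟩, hub⟩ := hlamT
  have hχlast : χ (Fin.last ℓ) < 0 := hneg _
  have hε_last : ε < -χ (Fin.last ℓ) := lt_of_lt_of_le hε' (min_le_left _ _)
  have hε_lam : ε < -lam / ((d : ℝ) + 2) := lt_of_lt_of_le hε' (min_le_right _ _)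
  have hd1 : (1 : ℤ) ≤ d := by
    rw [hd, Int.le_floor]
    push_cast
    rw [le_div_iff_of_neg hχlast, one_mul]
    exact hmono.monotone (Fin.zero_le _)
  have hdR : (1 : ℝ) ≤ (d : ℝ) := by exact_mod_cast hd1
  have hdpos : (0 : ℝ) < (d : ℝ) + 2 := by linarith
  have hdlt : ((d : ℝ) + 1) * χ (Fin.last ℓ) < χ 0 := by
    have h := Int.lt_floor_add_one (χ 0 / χ (Fin.last ℓ))
    rw [← hd] at h
    exact (div_lt_iff_of_neg hχlast).mp h
  have hlam_neg : lam < 0 := by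
    rw [hlam]; exact max_lt hlamT_neg (by linarith)
  have hpart1 : lam + ((d : ℝ) + 2) * ε < 0 := by
    rw [lt_div_iff₀ hdpos] at hε_lam
    nlinarith
  have hC0 : 0 ≤ C := by
    have := hC 0 (by simp)
    exact le_trans (norm_nonneg _) this
  refine ⟨hpart1, ?_, fun hCpos => ?_⟩
  · intro v hv
    set a : Fin (ℓ + 1) → ℝ := fun j => Real.exp (χ j + ε) with ha
    have hapos : ∀ j, 0 < a j := fun j => Real.exp_pos _
    set u : PiLp 2 E' := WithLp.toLp 2 (fun j => (a j)⁻¹ • (F j (v j))) with hu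
    have hw : (fun j => a j • u j) = fun j => F j (v j) := by
      funext j; exact smul_inv_smul₀ (hapos j).ne' _
    have hRw : R (WithLp.toLp 2 (fun j => F j (v j))) = (∏ j, a j ^ s j) • R u := by
      rw [← hw]; exact hR a u.ofLp
    -- norm of `u` at most 1
    have hu_comp : ∀ j, ‖u j‖ ≤ ‖v j‖ := by
      intro j
      show ‖(a j)⁻¹ • F j (v j)‖ ≤ ‖v j‖
      simp only [norm_smul, norm_inv, Real.norm_eq_abs, abs_of_pos (hapos j)]
      rw [inv_mul_le_iff₀ (hapos j)]
      exact (hF j (v j)).2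
    have hu_norm : ‖u‖ ≤ 1 := by
      have h2 : ‖u‖ ≤ ‖v‖ := by
        have hsq : ‖u‖ ^ 2 ≤ ‖v‖ ^ 2 := by
          rw [PiLp.norm_sq_eq_of_L2, PiLp.norm_sq_eq_of_L2]
          exact Finset.sum_le_sum fun j _ =>
            pow_le_pow_left₀ (norm_nonneg _) (hu_comp j) 2
        exact (pow_le_pow_iff_left₀ (norm_nonneg _) (norm_nonneg _) two_ne_zero).mp hsq
      linarith
    have hRu : ‖R u‖ ≤ C := hC u hu_norm
    -- the scaling product
    have hprod : (∏ j, a j ^ s j) = Real.exp (∑ j, (s j : ℝ) * (χ j + ε)) := by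
      rw [Real.exp_sum]
      refine Finset.prod_congr rfl fun j _ => ?_
      rw [Real.exp_nat_mul]
    have hRw_norm : ‖R (WithLp.toLp 2 (fun j => F j (v j)))‖ ≤ Real.exp (∑ j, (s j : ℝ) * (χ j + ε)) * C := by
      rw [hRw, norm_smul, Real.norm_eq_abs, hprod, abs_of_pos (Real.exp_pos _)]
      exact mul_le_mul_of_nonneg_left hRu (Real.exp_pos _).le
    -- inverting `F i`
    set y : E' i := R (WithLp.toLp 2 (fun j => F j (v j))) with hy
    have hFi : ‖(F i).symm y‖ ≤ Real.exp (ε - χ i) * ‖y‖ := by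
      have h1 := (hF i ((F i).symm y)).1
      rw [(F i).apply_symm_apply] at h1
      have hmul : Real.exp (ε - χ i) * Real.exp (χ i - ε) = 1 := by
        rw [← Real.exp_add]; ring_nf; exact Real.exp_zero
      calc ‖(F i).symm y‖
          = Real.exp (ε - χ i) * (Real.exp (χ i - ε) * ‖(F i).symm y‖) := by
            rw [← mul_assoc, hmul, one_mul]
        _ ≤ Real.exp (ε - χ i) * ‖y‖ :=
            mul_le_mul_of_nonneg_left h1 (Real.exp_pos _).le
    -- the key exponent inequality
    have hsum : (∑ j, (s j : ℝ) * (χ j + ε))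
        = (∑ j, (s j : ℝ) * χ j) + (∑ j, (s j : ℝ)) * ε := by
      rw [Finset.sum_mul, ← Finset.sum_add_distrib]
      exact Finset.sum_congr rfl fun j _ => by ring
    have key : ε - χ i + ∑ j, (s j : ℝ) * (χ j + ε) ≤ lam + ((d : ℝ) + 2) * ε := by
      rw [hsum]
      set n : ℝ := ∑ j, (s j : ℝ) with hn
      have hn0 : 0 ≤ n := Finset.sum_nonneg fun j _ => Nat.cast_nonneg _
      rcases le_or_gt n ((d : ℝ) + 1) with hcase | hcase
      · have hx : -χ i + ∑ j, (s j : ℝ) * χ j ≤ lamT :=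
          hub ⟨by linarith, i, s, rfl⟩
        have hTl : lamT ≤ lam := hlam ▸ le_max_left _ _
        nlinarith
      · have h1 : χ 0 ≤ χ i := hmono.monotone (Fin.zero_le i)
        have h2 : (∑ j, (s j : ℝ) * χ j) ≤ n * χ (Fin.last ℓ) := by
          rw [hn, Finset.sum_mul]
          exact Finset.sum_le_sum fun j _ =>
            mul_le_mul_of_nonneg_left (hmono.monotone (Fin.le_last j)) (Nat.cast_nonneg _)
        have h3 : -χ 0 + ((d : ℝ) + 1) * χ (Fin.last ℓ) ≤ lam := hlam ▸ le_max_right _ _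
        have h4 : χ (Fin.last ℓ) + ε < 0 := by linarith
        nlinarith [mul_nonneg (by linarith : (0 : ℝ) ≤ n - (d : ℝ) - 1)
          (by linarith : (0 : ℝ) ≤ -(χ (Fin.last ℓ) + ε))]
    calc ‖(F i).symm y‖ ≤ Real.exp (ε - χ i) * ‖y‖ := hFi
      _ ≤ Real.exp (ε - χ i) * (Real.exp (∑ j, (s j : ℝ) * (χ j + ε)) * C) :=
          mul_le_mul_of_nonneg_left hRw_norm (Real.exp_pos _).le
      _ = Real.exp (ε - χ i + ∑ j, (s j : ℝ) * (χ j + ε)) * C := by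
          rw [← mul_assoc, ← Real.exp_add]
      _ ≤ Real.exp (lam + ((d : ℝ) + 2) * ε) * C :=
          mul_le_mul_of_nonneg_right (Real.exp_le_exp.mpr key) hC0
  · have h1 : Real.exp (lam + ((d : ℝ) + 2) * ε) < 1 := Real.exp_lt_one_iff.mpr hpart1
    calc Real.exp (lam + ((d : ℝ) + 2) * ε) * C < 1 * C := mul_lt_mul_of_pos_right h1 hCpos
      _ = C := one_mul C
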